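/- Let a ∈ ℝ, b > 0, c = a/b and c₀ < 0, and let ρ(x,t) = ρ¹(x,t) + ρ²(x,t) + ρ³(x,t) be the explicit solution defined below. Then for every x > 0, ρ(x,t) → −c₀ e^{c₀ x} as t → 0⁺; that is, the explicit solution attains the exponential initial datum ρ₀(x) = −c₀ e^{c₀ x} pointwise. -/

import Mathlib

open MeasureTheory Set Filter Topology

/-- The standard normal cumulative distribution function `Φ`. -/
noncomputable def stdNormalCdf (z : ℝ) : ℝ :=
  ∫ x in Iic z, (Real.sqrt (2 * Real.pi))⁻¹ * Real.exp (-x ^ 2 / 2)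

lemma stdNormal_integrable :
    Integrable (fun x : ℝ => (Real.sqrt (2 * Real.pi))⁻¹ * Real.exp (-x ^ 2 / 2)) := by
  have : ∀ x : ℝ, Real.exp (-x ^ 2 / 2) = Real.exp (-(1/2 : ℝ) * x ^ 2) := by
    intro x; ring_nf
  simp only [this]
  exact (integrable_exp_neg_mul_sq (by norm_num)).const_mul _

lemma stdNormal_total :
    (∫ x : ℝ, (Real.sqrt (2 * Real.pi))⁻¹ * Real.exp (-x ^ 2 / 2)) = 1 := by
  have h : ∀ x : ℝ, Real.exp (-x ^ 2 / 2) = Real.exp (-(1/2 : ℝ) * x ^ 2) := by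
    intro x; ring_nf
  simp only [h, integral_const_mul, integral_gaussian]
  rw [← Real.sqrt_inv, ← Real.sqrt_mul (by positivity)]
  rw [show (2 * Real.pi)⁻¹ * (Real.pi / (1/2)) = 1 by
    field_simp]
  simp

lemma stdNormalCdf_tendsto_atTop : Tendsto stdNormalCdf atTop (𝓝 1) := by
  rw [← stdNormal_total]
  exact ((aecover_Iic (μ := (volume : Measure ℝ)) (l := atTop) (b := fun z : ℝ => z)
    tendsto_id)).integral_tendsto_of_countably_generated stdNormal_integrable

lemma stdNormalCdf_symm (z : ℝ) : stdNormalCdf z = 1 - stdNormalCdf (-z) := by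
  have htot := intervalIntegral.integral_Iic_add_Ioi (μ := volume) (b := -z)
    stdNormal_integrable.integrableOn stdNormal_integrable.integrableOn
  have hcomp : (∫ x in Ioi (-z), (Real.sqrt (2 * Real.pi))⁻¹ * Real.exp (-x ^ 2 / 2))
      = stdNormalCdf z := by
    have h := integral_comp_neg_Ioi (-z)
      (fun x => (Real.sqrt (2 * Real.pi))⁻¹ * Real.exp (-x ^ 2 / 2))
    simp only [neg_sq, neg_neg] at h
    simpa [stdNormalCdf] using h
  rw [stdNormal_total, hcomp] at htot
  unfold stdNormalCdf at *
  linarith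

lemma stdNormalCdf_tendsto_atBot : Tendsto stdNormalCdf atBot (𝓝 0) := by
  have : Tendsto (fun z => 1 - stdNormalCdf (-z)) atBot (𝓝 0) := by
    have := (stdNormalCdf_tendsto_atTop.comp tendsto_neg_atBot_atTop).const_sub 1
    simpa using this
  exact this.congr fun z => (stdNormalCdf_symm z).symm

lemma sqrt_tendsto (b : ℝ) (hb : 0 < b) :
    Tendsto (fun t : ℝ => Real.sqrt (2 * b * t)) (𝓝[>] 0) (𝓝[>] 0) := by
  rw [tendsto_nhdsWithin_iff]
  constructor
  · have : Tendsto (fun t : ℝ => Real.sqrt (2 * b * t)) (𝓝 0) (𝓝 (Real.sqrt (2 * b * 0))) :=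
      (Real.continuous_sqrt.comp (by continuity)).tendsto 0
    simpa using this.mono_left nhdsWithin_le_nhds
  · filter_upwards [self_mem_nhdsWithin] with t ht
    have ht' : 0 < t := ht
    exact Real.sqrt_pos.2 (by positivity)

lemma arg_tendsto_top {b K : ℝ} (hb : 0 < b) (hK : 0 < K) {f : ℝ → ℝ}
    (hf : Tendsto f (𝓝[>] 0) (𝓝 K)) :
    Tendsto (fun t => f t / Real.sqrt (2 * b * t)) (𝓝[>] 0) atTop := by
  simp only [div_eq_mul_inv]
  exact hf.pos_mul_atTop hK (tendsto_inv_nhdsGT_zero.comp (sqrt_tendsto b hb))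

lemma arg_tendsto_bot {b K : ℝ} (hb : 0 < b) (hK : K < 0) {f : ℝ → ℝ}
    (hf : Tendsto f (𝓝[>] 0) (𝓝 K)) :
    Tendsto (fun t => f t / Real.sqrt (2 * b * t)) (𝓝[>] 0) atBot := by
  simp only [div_eq_mul_inv]
  exact hf.neg_mul_atTop hK (tendsto_inv_nhdsGT_zero.comp (sqrt_tendsto b hb))

/-- First part `ρ¹` of the explicit solution (with `c = a/b`, `σ = √(2bt)`). -/
noncomputable def explRho1 (a b c₀ : ℝ) (x t : ℝ) : ℝ :=
  -c₀ * Real.exp (c₀ * (c₀ * b * t + x - a * t)) *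
    stdNormalCdf ((2 * c₀ * b * t + x - a * t) / Real.sqrt (2 * b * t))

/-- Second part `ρ²` of the explicit solution (with `d = c₀ − a/b`). -/
noncomputable def explRho2 (a b c₀ : ℝ) (x t : ℝ) : ℝ :=
  -c₀ * Real.exp ((c₀ - a / b) * ((c₀ - a / b) * b * t - x + a * t)) *
    stdNormalCdf ((2 * (c₀ - a / b) * b * t - x + a * t) / Real.sqrt (2 * b * t))

/-- Third part `ρ³` of the explicit solution (with `c = a/b`). -/
noncomputable def explRho3 (a b c₀ : ℝ) (x t : ℝ) : ℝ :=
  -(a / b) * Real.exp ((a / b) * x) *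
      stdNormalCdf (-(x + a * t) / Real.sqrt (2 * b * t))
  + (a / b) * Real.exp ((a / b) * x) * Real.exp (c₀ * (c₀ * b * t - x - a * t)) *
      stdNormalCdf ((2 * c₀ * b * t - x - a * t) / Real.sqrt (2 * b * t))

/-- The explicit solution `ρ = ρ¹ + ρ² + ρ³` of the Smoluchowski equation on the
half-line with exponential initial datum `ρ₀(x) = −c₀ e^{c₀ x}`. -/
noncomputable def explRho (a b c₀ : ℝ) (x t : ℝ) : ℝ :=
  explRho1 a b c₀ x t + explRho2 a b c₀ x t + explRho3 a b c₀ x t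

/-- The explicit solution attains the exponential initial datum
`ρ₀(x) = −c₀ e^{c₀ x}` pointwise as `t → 0⁺`. -/
theorem stmt_11 (a b c₀ : ℝ) (hb : 0 < b) (hc₀ : c₀ < 0) :
    ∀ x > (0:ℝ),
      Tendsto (fun t => explRho a b c₀ x t) (𝓝[>] 0)
        (𝓝 (-c₀ * Real.exp (c₀ * x))) := by
  intro x hx
  -- generic: linear function of t tends to its value at 0
  have lin : ∀ m K : ℝ, Tendsto (fun t : ℝ => m * t + K) (𝓝[>] 0) (𝓝 K) := by
    intro m K
    have : Tendsto (fun t : ℝ => m * t + K) (𝓝 0) (𝓝 (m * 0 + K)) := by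
      exact ((continuous_const.mul continuous_id).add continuous_const).tendsto 0
    simpa using this.mono_left nhdsWithin_le_nhds
  have expc : ∀ m K : ℝ, Tendsto (fun t : ℝ => Real.exp (m * t + K)) (𝓝[>] 0)
      (𝓝 (Real.exp K)) := fun m K => (Real.continuous_exp.tendsto _).comp (lin m K)
  -- ρ1 limit
  have h1 : Tendsto (fun t => explRho1 a b c₀ x t) (𝓝[>] 0) (𝓝 (-c₀ * Real.exp (c₀ * x))) := by
    unfold explRho1
    have hΦ : Tendsto (fun t => stdNormalCdf ((2 * c₀ * b * t + x - a * t) /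
        Real.sqrt (2 * b * t))) (𝓝[>] 0) (𝓝 1) := by
      refine stdNormalCdf_tendsto_atTop.comp (arg_tendsto_top hb hx ?_)
      exact (lin (2 * c₀ * b - a) x).congr (fun t => by ring)
    have hE : Tendsto (fun t => Real.exp (c₀ * (c₀ * b * t + x - a * t))) (𝓝[>] 0)
        (𝓝 (Real.exp (c₀ * x))) := by
      have := expc (c₀ * (c₀ * b) - c₀ * a) (c₀ * x)
      exact this.congr (fun t => by ring_nf)
    have := ((hE.const_mul (-c₀)).mul hΦ)
    simpa using this
  -- ρ2 limit
  have h2 : Tendsto (fun t => explRho2 a b c₀ x t) (𝓝[>] 0) (𝓝 0) := by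
    unfold explRho2
    have hΦ : Tendsto (fun t => stdNormalCdf ((2 * (c₀ - a / b) * b * t - x + a * t) /
        Real.sqrt (2 * b * t))) (𝓝[>] 0) (𝓝 0) := by
      refine stdNormalCdf_tendsto_atBot.comp (arg_tendsto_bot hb (neg_neg_iff_pos.mpr hx) ?_)
      exact (lin (2 * (c₀ - a / b) * b + a) (-x)).congr (fun t => by ring)
    have hE : Tendsto (fun t => Real.exp ((c₀ - a / b) * ((c₀ - a / b) * b * t - x + a * t)))
        (𝓝[>] 0) (𝓝 (Real.exp ((c₀ - a / b) * (-x)))) := by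
      have := expc ((c₀ - a / b) * ((c₀ - a / b) * b) + (c₀ - a / b) * a) ((c₀ - a / b) * (-x))
      exact this.congr (fun t => by ring_nf)
    have := ((hE.const_mul (-c₀)).mul hΦ)
    simpa using this
  -- ρ3 limit
  have h3 : Tendsto (fun t => explRho3 a b c₀ x t) (𝓝[>] 0) (𝓝 0) := by
    unfold explRho3
    have hΦ1 : Tendsto (fun t => stdNormalCdf (-(x + a * t) / Real.sqrt (2 * b * t)))
        (𝓝[>] 0) (𝓝 0) := by
      refine stdNormalCdf_tendsto_atBot.comp (arg_tendsto_bot hb (neg_neg_iff_pos.mpr hx) ?_)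
      exact (lin (-a) (-x)).congr (fun t => by ring)
    have hΦ2 : Tendsto (fun t => stdNormalCdf ((2 * c₀ * b * t - x - a * t) /
        Real.sqrt (2 * b * t))) (𝓝[>] 0) (𝓝 0) := by
      refine stdNormalCdf_tendsto_atBot.comp (arg_tendsto_bot hb (neg_neg_iff_pos.mpr hx) ?_)
      exact (lin (2 * c₀ * b - a) (-x)).congr (fun t => by ring)
    have hE : Tendsto (fun t => Real.exp (c₀ * (c₀ * b * t - x - a * t))) (𝓝[>] 0)
        (𝓝 (Real.exp (c₀ * (-x)))) := by
      have := expc (c₀ * (c₀ * b) - c₀ * a) (c₀ * (-x))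
      exact this.congr (fun t => by ring_nf)
    have t1 := hΦ1.const_mul (-(a / b) * Real.exp ((a / b) * x))
    have t2 := ((hE.const_mul (a / b * Real.exp ((a / b) * x))).mul hΦ2)
    simpa using t1.add t2
  have := (h1.add h2).add h3
  simpa [explRho] using this
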